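/- Let L be a principally generated C-lattice that is a lattice domain, let a ∈ L be nonzero, and let x ∈ L be a nonzero principal element. Then (x·a)_v = x·(a_v). -/

import Mathlib

/-- A multiplicative lattice: a complete lattice (bottom `⊥` playing the role of `0`)
which is a commutative monoid whose identity `1` is the top element, and in which
multiplication distributes over arbitrary joins. -/
class MulLattice (L : Type*) extends CompleteLattice L, CommMonoid L where
  one_eq_top : (1 : L) = ⊤
  mul_sSup : ∀ (a : L) (S : Set L), a * sSup S = ⨆ b ∈ S, a * b

namespace MulLattice

variable {L : Type*} [MulLattice L]

/-- The residual `(y : x) = ⋁ {a | a * x ≤ y}`. -/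
def res (y x : L) : L := sSup {a : L | a * x ≤ y}

/-- `x` is meet-principal: `y ⊓ z * x = ((y : x) ⊓ z) * x` for all `y, z`. -/
def IsMeetPrincipal (x : L) : Prop := ∀ y z : L, y ⊓ z * x = (res y x ⊓ z) * x

/-- `x` is join-principal: `y ⊔ (z : x) = ((y * x ⊔ z) : x)` for all `y, z`. -/
def IsJoinPrincipal (x : L) : Prop := ∀ y z : L, y ⊔ res z x = res (y * x ⊔ z) x

/-- `x` is principal if it is both meet-principal and join-principal. -/
def IsPrincipal (x : L) : Prop := IsMeetPrincipal x ∧ IsJoinPrincipal x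

/-- A prime element: a proper element `p` with `x * y ≤ p → x ≤ p ∨ y ≤ p`. -/
def IsPrime (p : L) : Prop := p ≠ 1 ∧ ∀ x y : L, x * y ≤ p → x ≤ p ∨ y ≤ p

/-- A maximal element: an element maximal in `L - {1}`. -/
def IsMaximal (m : L) : Prop := m ≠ 1 ∧ ∀ b : L, m < b → b = 1

end MulLattice

namespace CompleteLattice

/-- The December 2024 Mathlib definition of a compact element (since removed from this
namespace): `k ≤ sSup s` implies `k ≤` the join of a finite subset of `s`. -/
def IsCompactElement {α : Type*} [CompleteLattice α] (k : α) :=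
  ∀ s : Set α, k ≤ sSup s → ∃ t : Finset α, ↑t ⊆ s ∧ k ≤ t.sup id

end CompleteLattice

/-- A principally generated C-lattice: a multiplicative lattice in which `1` is compact,
compact elements are closed under multiplication, every element is a join of compact
elements and every element is a join of principal elements. -/
class PGCLattice (L : Type*) extends MulLattice L where
  top_isCompact : CompleteLattice.IsCompactElement (⊤ : L)
  compact_mul : ∀ a b : L, CompleteLattice.IsCompactElement a →
    CompleteLattice.IsCompactElement b → CompleteLattice.IsCompactElement (a * b)
  compactly_generated : ∀ a : L,
    a = sSup {c : L | CompleteLattice.IsCompactElement c ∧ c ≤ a}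
  principally_generated : ∀ a : L,
    a = sSup {x : L | MulLattice.IsPrincipal x ∧ x ≤ a}

namespace MulLattice

variable {L : Type*}

/-- A lattice domain: `0 = ⊥` is a prime element. -/
def IsLatticeDomain (L : Type*) [MulLattice L] : Prop := IsPrime (⊥ : L)

variable [PGCLattice L]

open Classical in
/-- The divisorial (`v`-)closure of `a`: equals `(x : (x : a))` for a nonzero principal
`x ≤ a` when such an `x` exists (in a lattice domain this is independent of the choice
of `x`), and `⊥` otherwise (in particular `vclos ⊥ = ⊥`). -/
noncomputable def vclos (a : L) : L :=
  if h : ∃ x : L, IsPrincipal x ∧ x ≠ ⊥ ∧ x ≤ a then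
    res h.choose (res h.choose a)
  else ⊥

/-- `a` is divisorial if `a = a_v`. -/
def IsDivisorial (a : L) : Prop := vclos a = a

/-- `L` is h-local: every nonzero prime is below a unique maximal element and
every nonzero element is below only finitely many maximal elements. -/
def IsHLocal (L : Type*) [PGCLattice L] : Prop :=
  (∀ r : L, r ≠ ⊥ → IsPrime r → ∃! m : L, IsMaximal m ∧ r ≤ m) ∧
  (∀ b : L, b ≠ ⊥ → {m : L | IsMaximal m ∧ b ≤ m}.Finite)

end MulLattice


namespace MulLatticeAux

open MulLattice

variable {L : Type*} [MulLattice L]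

lemma mul_sup' (c a b : L) : c * (a ⊔ b) = c * a ⊔ c * b := by
  rw [← sSup_pair, MulLattice.mul_sSup, iSup_pair]

lemma mul_mono_right (c : L) {a b : L} (h : a ≤ b) : c * a ≤ c * b := by
  have h2 : c * (a ⊔ b) = c * b := by rw [sup_eq_right.mpr h]
  rw [← h2, mul_sup']; exact le_sup_left

lemma mul_mono_left {a b : L} (h : a ≤ b) (c : L) : a * c ≤ b * c := by
  rw [mul_comm a c, mul_comm b c]; exact mul_mono_right c h

lemma mul_le_left (a b : L) : a * b ≤ a := by
  have := mul_mono_right a (le_top (a := b))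
  rwa [← MulLattice.one_eq_top, mul_one] at this

lemma res_mul_le (y x : L) : res y x * x ≤ y := by
  rw [res, mul_comm, MulLattice.mul_sSup]
  exact iSup₂_le fun b hb => by rw [mul_comm]; exact hb

lemma le_res_iff {t y x : L} : t ≤ res y x ↔ t * x ≤ y :=
  ⟨fun h => le_trans (mul_mono_left h x) (res_mul_le y x),
   fun h => le_sSup h⟩

lemma res_bot (hL : IsLatticeDomain L) {x : L} (hx : x ≠ ⊥) : res ⊥ x = ⊥ := by
  apply le_bot_iff.mp
  apply sSup_le
  intro t ht
  rcases hL.2 t x ht with h | h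
  · exact h
  · exact absurd (le_bot_iff.mp h) hx

lemma res_mul_self (hL : IsLatticeDomain L) {x : L} (hx : IsPrincipal x) (hx0 : x ≠ ⊥)
    (z : L) : res (z * x) x = z := by
  have h := hx.2 z ⊥
  rw [res_bot hL hx0, sup_bot_eq, sup_bot_eq] at h
  exact h.symm

lemma cancel (hL : IsLatticeDomain L) {x : L} (hx : IsPrincipal x) (hx0 : x ≠ ⊥)
    {u z : L} (h : u * x ≤ z * x) : u ≤ z := by
  have h2 : u ≤ res (z * x) x := le_res_iff.mpr h
  rwa [res_mul_self hL hx hx0] at h2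

lemma factor {x z : L} (hx : IsMeetPrincipal x) (h : z ≤ x) : res z x * x = z := by
  have h2 := hx z ⊤
  rw [inf_top_eq, ← MulLattice.one_eq_top, one_mul, inf_eq_left.mpr h] at h2
  exact h2.symm

lemma res_res (w x y : L) : res (res w x) y = res w (y * x) := by
  apply le_antisymm
  · apply le_res_iff.mpr
    calc res (res w x) y * (y * x) = (res (res w x) y * y) * x := by rw [mul_assoc]
      _ ≤ res w x * x := mul_mono_left (res_mul_le _ _) x
      _ ≤ w := res_mul_le _ _
  · apply le_res_iff.mpr
    apply le_res_iff.mpr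
    calc res w (y * x) * y * x = res w (y * x) * (y * x) := by rw [mul_assoc]
      _ ≤ w := res_mul_le _ _

lemma isPrincipal_mul {x y : L} (hx : IsPrincipal x) (hy : IsPrincipal y) :
    IsPrincipal (x * y) := by
  constructor
  · intro a z
    have key : res (res a x) y = res a (x * y) := by rw [res_res, mul_comm]
    calc a ⊓ z * (x * y) = a ⊓ (z * y) * x := by rw [mul_comm x y, ← mul_assoc]
      _ = (res a x ⊓ z * y) * x := hx.1 a (z * y)
      _ = ((res (res a x) y ⊓ z) * y) * x := by rw [hy.1 (res a x) z]
      _ = (res a (x * y) ⊓ z) * (x * y) := by rw [key, mul_assoc, mul_comm y x]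
  · intro a z
    have key : res (res z x) y = res z (x * y) := by rw [res_res, mul_comm]
    calc a ⊔ res z (x * y) = a ⊔ res (res z x) y := by rw [key]
      _ = res (a * y ⊔ res z x) y := hy.2 a (res z x)
      _ = res (res (a * y * x ⊔ z) x) y := by rw [hx.2 (a * y) z]
      _ = res (a * y * x ⊔ z) (y * x) := res_res _ _ _
      _ = res (a * (x * y) ⊔ z) (x * y) := by
          rw [mul_comm y x, mul_assoc, mul_comm y x]

lemma mul_ne_bot (hL : IsLatticeDomain L) {x a : L} (hx : x ≠ ⊥) (ha : a ≠ ⊥) :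
    x * a ≠ ⊥ := by
  intro h
  rcases hL.2 x a (le_of_eq h) with h' | h'
  · exact hx (le_bot_iff.mp h')
  · exact ha (le_bot_iff.mp h')

lemma vaux (hL : IsLatticeDomain L) {a x y : L}
    (hx : IsPrincipal x) (hx0 : x ≠ ⊥) (hxa : x ≤ a)
    (hy : IsPrincipal y) (hy0 : y ≠ ⊥) (hya : y ≤ a) :
    res x (res x a) ≤ res y (res y a) := by
  set T := res x (res x a) with hT
  set S := res y a with hS
  have hSxy : S * x ≤ y := le_trans (mul_mono_right S hxa) (res_mul_le y a)
  set u := res (S * x) y with hu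
  have huy : u * y = S * x := factor hy.1 hSxy
  have hua : u * a ≤ x := by
    apply cancel hL hy hy0
    calc u * a * y = (u * y) * a := by rw [mul_assoc, mul_comm a y, ← mul_assoc]
      _ = S * x * a := by rw [huy]
      _ = (S * a) * x := by rw [mul_assoc, mul_comm x a, ← mul_assoc]
      _ ≤ y * x := mul_mono_left (res_mul_le y a) x
      _ = x * y := mul_comm y x
  have hTu : T * u ≤ x :=
    le_trans (mul_mono_right T (le_res_iff.mpr hua)) (res_mul_le x (res x a))
  have hTS : T * S ≤ y := by
    apply cancel hL hx hx0
    calc T * S * x = T * (S * x) := mul_assoc _ _ _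
      _ = T * (u * y) := by rw [huy]
      _ = (T * u) * y := (mul_assoc _ _ _).symm
      _ ≤ x * y := mul_mono_left hTu y
      _ = y * x := mul_comm x y
  exact le_res_iff.mpr hTS

lemma vclos_welldef (hL : IsLatticeDomain L) {a x y : L}
    (hx : IsPrincipal x) (hx0 : x ≠ ⊥) (hxa : x ≤ a)
    (hy : IsPrincipal y) (hy0 : y ≠ ⊥) (hya : y ≤ a) :
    res x (res x a) = res y (res y a) :=
  le_antisymm (vaux hL hx hx0 hxa hy hy0 hya) (vaux hL hy hy0 hya hx hx0 hxa)

end MulLatticeAux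

namespace MulLatticeAux

open MulLattice

variable {L : Type*} [PGCLattice L]

lemma vclos_eq (hL : IsLatticeDomain L) {a q : L} (hq : IsPrincipal q) (hq0 : q ≠ ⊥)
    (hqa : q ≤ a) : vclos a = res q (res q a) := by
  have hex : ∃ x : L, IsPrincipal x ∧ x ≠ ⊥ ∧ x ≤ a := ⟨q, hq, hq0, hqa⟩
  rw [vclos, dif_pos hex]
  obtain ⟨hp, hp0, hpa⟩ := hex.choose_spec
  exact vclos_welldef hL hp hp0 hpa hq hq0 hqa

lemma exists_nz_principal (b : L) (hb : b ≠ ⊥) :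
    ∃ c : L, IsPrincipal c ∧ c ≠ ⊥ ∧ c ≤ b := by
  by_contra h
  push_neg at h
  apply hb
  apply le_bot_iff.mp
  conv_lhs => rw [PGCLattice.principally_generated b]
  apply sSup_le
  rintro c ⟨hc1, hc2⟩
  rcases eq_or_ne c ⊥ with rfl | hc
  · exact le_refl _
  · exact absurd hc2 (h c hc1 hc)

end MulLatticeAux

open MulLatticeAux

open MulLattice

theorem stmt5 {L : Type*} [PGCLattice L] (hL : IsLatticeDomain L)
    (a x : L) (ha : a ≠ ⊥) (hx0 : x ≠ ⊥) (hx : IsPrincipal x) :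
    vclos (x * a) = x * vclos a := by
  obtain ⟨p, hp, hp0, hpa⟩ := exists_nz_principal a ha
  have hxp : IsPrincipal (x * p) := isPrincipal_mul hx hp
  have hxp0 : x * p ≠ ⊥ := mul_ne_bot hL hx0 hp0
  have hxpa : x * p ≤ x * a := mul_mono_right x hpa
  rw [vclos_eq hL hp hp0 hpa, vclos_eq hL hxp hxp0 hxpa]
  have h1 : res (x * p) (x * a) = res p a := by
    apply le_antisymm
    · apply le_res_iff.mpr
      apply cancel hL hx hx0
      calc res (x * p) (x * a) * a * x = res (x * p) (x * a) * (x * a) := by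
            rw [mul_assoc, mul_comm a x]
        _ ≤ x * p := res_mul_le _ _
        _ = p * x := mul_comm _ _
    · apply le_res_iff.mpr
      calc res p a * (x * a) = (res p a * a) * x := by
            rw [mul_assoc, mul_comm x a, ← mul_assoc]
        _ ≤ p * x := mul_mono_left (res_mul_le p a) x
        _ = x * p := mul_comm _ _
  rw [h1]
  set w := res p a with hw
  have hpw : p ≤ w := le_res_iff.mpr (mul_le_left p a)
  apply le_antisymm
  · set T := res (x * p) w with hTdef
    have hT : T * w ≤ x * p := res_mul_le _ _
    have hTx : T ≤ x := cancel hL hp hp0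
      (calc T * p ≤ T * w := mul_mono_right T hpw
        _ ≤ x * p := hT)
    set U := res T x with hUdef
    have hU : U * x = T := factor hx.1 hTx
    have hUw : U * w ≤ p := by
      apply cancel hL hx hx0
      calc U * w * x = (U * x) * w := by rw [mul_assoc, mul_comm w x, ← mul_assoc]
        _ = T * w := by rw [hU]
        _ ≤ x * p := hT
        _ = p * x := mul_comm _ _
    calc T = U * x := hU.symm
      _ ≤ res p w * x := mul_mono_left (le_res_iff.mpr hUw) x
      _ = x * res p w := mul_comm _ _
  · apply le_res_iff.mpr
    calc x * res p w * w = x * (res p w * w) := mul_assoc _ _ _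
      _ ≤ x * p := mul_mono_right x (res_mul_le p w)
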